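/- Suppose all weights are equal to 1 (W_{kl} = 1 for all l > k) and γ, μ > 0. Fix (i,j), let Θ⋆_ij ∈ ℝ^K have at least one nonzero entry, and let F be the adjugate matrix of B_{S_B:}ᵀ B_{S_B:}. Then for every pair of indices k ≠ l with Θ⋆_{k;ij} = Θ⋆_{l;ij} ≠ 0, letting S̄ = {r ∈ {1,…,K} : Θ⋆_{r;ij} ≠ Θ⋆_{k;ij}}, we have F_{kk} − F_{kl} = det(B_{S_B:}ᵀ B_{S_B:}) / (|S̄|·γ²/μ² + 1). -/
import Mathlib


open scoped Classical
open Matrix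

/-- The Moore–Penrose pseudoinverse of a real matrix, characterized by the four Penrose
conditions (which determine it uniquely; it always exists for real matrices). -/
noncomputable def moorePenrose {m n : Type*} [Fintype m] [Fintype n]
    (B : Matrix m n ℝ) : Matrix n m ℝ :=
  if h : ∃ X : Matrix n m ℝ,
      B * X * B = B ∧ X * B * X = X ∧ (B * X)ᵀ = B * X ∧ (X * B)ᵀ = X * B then
    h.choose
  else 0

/-- The matrix `B = [(γ/μ)GA ; I_K]` for `q = 1`. -/
noncomputable def Bmat (K : ℕ) (W : Fin K → Fin K → ℝ) (γ μ : ℝ) :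
    Matrix ({p : Fin K × Fin K // p.1 < p.2} ⊕ Fin K) (Fin K) ℝ :=
  Matrix.of fun r c =>
    match r with
    | Sum.inl p => γ / μ * (W p.val.1 p.val.2 *
        (if c = p.val.1 then 1 else if c = p.val.2 then -1 else 0))
    | Sum.inr k => if c = k then 1 else 0

/-- The support `S_B` of `BΘ⋆`. -/
noncomputable def suppB (K : ℕ) (W : Fin K → Fin K → ℝ) (γ μ : ℝ) (Θ : Fin K → ℝ) :
    Finset ({p : Fin K × Fin K // p.1 < p.2} ⊕ Fin K) :=
  Finset.univ.filter fun r => ((Bmat K W γ μ) *ᵥ Θ) r ≠ 0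

/-- The submatrix `B_{S_B:}` of rows of `B` indexed by `S_B`. -/
noncomputable def BmatS (K : ℕ) (W : Fin K → Fin K → ℝ) (γ μ : ℝ) (Θ : Fin K → ℝ) :
    Matrix {x // x ∈ suppB K W γ μ Θ} (Fin K) ℝ :=
  (Bmat K W γ μ).submatrix Subtype.val id

/-- The sign vector `sign((BΘ⋆)_{S_B})`. -/
noncomputable def signBS (K : ℕ) (W : Fin K → Fin K → ℝ) (γ μ : ℝ) (Θ : Fin K → ℝ) :
    {x // x ∈ suppB K W γ μ Θ} → ℝ :=
  fun r => Real.sign (((Bmat K W γ μ) *ᵥ Θ) r.val)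

section AuxSTMT10
variable {K : ℕ} {W : Fin K → Fin K → ℝ} {γ μ : ℝ} {Θ : Fin K → ℝ}

lemma Bmat_mulVec_inl (hWone : ∀ k' l' : Fin K, k' < l' → W k' l' = 1)
    (u : Fin K → ℝ) (p : {p : Fin K × Fin K // p.1 < p.2}) :
    ((Bmat K W γ μ) *ᵥ u) (Sum.inl p) = γ / μ * (u p.val.1 - u p.val.2) := by
  have hne : p.val.1 ≠ p.val.2 := ne_of_lt p.prop
  simp only [Bmat, Matrix.mulVec, dotProduct, Matrix.of_apply, hWone _ _ p.prop, one_mul]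
  have h : ∀ b : Fin K,
      γ / μ * (if b = p.val.1 then (1:ℝ) else if b = p.val.2 then -1 else 0) * u b
      = (if b = p.val.1 then γ/μ * u p.val.1 else 0)
        + (if b = p.val.2 then -(γ/μ * u p.val.2) else 0) := by
    intro b
    by_cases h1 : b = p.val.1
    · subst h1; simp [hne]
    · by_cases h2 : b = p.val.2 <;> simp [h1, h2, hne.symm]
  rw [Finset.sum_congr rfl fun b _ => h b, Finset.sum_add_distrib]
  simp; ring

lemma Bmat_mulVec_inr (u : Fin K → ℝ) (m : Fin K) :
    ((Bmat K W γ μ) *ᵥ u) (Sum.inr m) = u m := by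
  simp [Bmat, Matrix.mulVec, dotProduct, ite_mul]

lemma sum_lt_symm' {f : Fin K → Fin K → ℝ}
    (hsym : ∀ x y, f x y = f y x) (hdiag : ∀ x, f x x = 0) :
    ∑ x, ∑ y, (if x < y then f x y else 0) = (∑ x, ∑ y, f x y) / 2 := by
  have h : ∑ x, ∑ y, f x y
      = ∑ x, ∑ y, ((if x < y then f x y else 0) + (if y < x then f x y else 0)) := by
    refine Finset.sum_congr rfl fun x _ => Finset.sum_congr rfl fun y _ => ?_
    rcases lt_trichotomy x y with h|h|h
    · simp [h, asymm h]
    · subst h; simp [hdiag, lt_irrefl]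
    · simp [h, asymm h]
  have h2 : ∑ x, ∑ y, (if y < x then f x y else 0) = ∑ x, ∑ y, (if x < y then f x y else 0) := by
    rw [Finset.sum_comm]
    exact Finset.sum_congr rfl fun x _ => Finset.sum_congr rfl fun y _ => by rw [hsym]
  simp only [Finset.sum_add_distrib] at h
  rw [h2] at h
  linarith

set_option maxHeartbeats 1000000 in
lemma M_mulVec (hWone : ∀ k' l' : Fin K, k' < l' → W k' l' = 1)
    (hγμ : γ / μ ≠ 0) (v : Fin K → ℝ) (a : Fin K) :
    (((BmatS K W γ μ Θ)ᵀ * BmatS K W γ μ Θ) *ᵥ v) a =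
      (γ/μ)^2 * (∑ x, ∑ y, if x < y then (if Θ x ≠ Θ y then
          ((if a = x then (1:ℝ) else 0) - (if a = y then 1 else 0)) * (v x - v y) else 0) else 0)
        + (if Θ a ≠ 0 then v a else 0) := by
  rw [← Matrix.mulVec_mulVec]
  have hLHS : ((BmatS K W γ μ Θ)ᵀ *ᵥ (BmatS K W γ μ Θ *ᵥ v)) a
      = ∑ r : {x // x ∈ suppB K W γ μ Θ}, Bmat K W γ μ r.val a * ((Bmat K W γ μ) *ᵥ v) r.val := by
    rfl
  rw [hLHS, Finset.sum_coe_sort (suppB K W γ μ Θ)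
    (fun r => Bmat K W γ μ r a * ((Bmat K W γ μ) *ᵥ v) r)]
  rw [suppB, Finset.sum_filter, Fintype.sum_sum_type]
  congr 1
  · have hpt : ∀ p : {p : Fin K × Fin K // p.1 < p.2},
        (if ((Bmat K W γ μ) *ᵥ Θ) (Sum.inl p) ≠ 0 then
          Bmat K W γ μ (Sum.inl p) a * ((Bmat K W γ μ) *ᵥ v) (Sum.inl p) else 0)
        = (γ/μ)^2 * (if Θ p.val.1 ≠ Θ p.val.2 then
            ((if a = p.val.1 then (1:ℝ) else 0) - (if a = p.val.2 then 1 else 0))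
              * (v p.val.1 - v p.val.2) else 0) := by
      intro p
      have hne : p.val.1 ≠ p.val.2 := ne_of_lt p.prop
      have hcond : (((Bmat K W γ μ) *ᵥ Θ) (Sum.inl p) ≠ 0) ↔ Θ p.val.1 ≠ Θ p.val.2 := by
        rw [Bmat_mulVec_inl hWone, mul_ne_zero_iff, sub_ne_zero]
        simp [hγμ]
      have hentry : Bmat K W γ μ (Sum.inl p) a
          = γ/μ * ((if a = p.val.1 then (1:ℝ) else 0) - (if a = p.val.2 then 1 else 0)) := by
        simp only [Bmat, Matrix.of_apply, hWone _ _ p.prop, one_mul]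
        by_cases h1 : a = p.val.1
        · subst h1; simp [hne]
        · by_cases h2 : a = p.val.2 <;> simp [h1, h2, Ne.symm hne]
      rw [if_congr hcond rfl rfl]
      by_cases h : Θ p.val.1 ≠ Θ p.val.2
      · rw [if_pos h, if_pos h, hentry, Bmat_mulVec_inl hWone]; ring
      · rw [if_neg h, if_neg h]; ring
    rw [Finset.sum_congr rfl fun p _ => hpt p, ← Finset.mul_sum]
    congr 1
    rw [← Finset.sum_subtype (Finset.univ.filter (fun q : Fin K × Fin K => q.1 < q.2))
      (by intro q; simp) (fun q : Fin K × Fin K => if Θ q.1 ≠ Θ q.2 then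
        ((if a = q.1 then (1:ℝ) else 0) - (if a = q.2 then 1 else 0)) * (v q.1 - v q.2) else 0)]
    rw [Finset.sum_filter, Fintype.sum_prod_type]
  · have hpt : ∀ m : Fin K,
        (if ((Bmat K W γ μ) *ᵥ Θ) (Sum.inr m) ≠ 0 then
          Bmat K W γ μ (Sum.inr m) a * ((Bmat K W γ μ) *ᵥ v) (Sum.inr m) else 0)
        = if m = a then (if Θ a ≠ 0 then v a else 0) else 0 := by
      intro m
      rw [Bmat_mulVec_inr, Bmat_mulVec_inr]
      by_cases hm : m = a
      · subst hm; simp [Bmat]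
      · simp [Bmat, hm, Ne.symm hm]
    rw [Finset.sum_congr rfl fun m _ => hpt m, Finset.sum_ite_eq' Finset.univ]
    simp

end AuxSTMT10

set_option maxHeartbeats 1000000 in
/-- with all weights equal to 1 and `γ, μ > 0`, let `F` be the adjugate of
`B_{S_B:}ᵀB_{S_B:}`. For every `k ≠ l` with `Θ⋆_k = Θ⋆_l ≠ 0`, letting
`S̄ = {r : Θ⋆_r ≠ Θ⋆_k}`, we have
`F_{kk} − F_{kl} = det(B_{S_B:}ᵀB_{S_B:}) / (|S̄|·γ²/μ² + 1)`. -/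
theorem adjugate_diagonal_difference
    (K : ℕ) (W : Fin K → Fin K → ℝ)
    (hWone : ∀ k' l' : Fin K, k' < l' → W k' l' = 1)
    (μ γ : ℝ) (hμ : 0 < μ) (hγ : 0 < γ)
    (Θ : Fin K → ℝ) (hΘ : ∃ k, Θ k ≠ 0) :
    ∀ k l : Fin K, k ≠ l → Θ k = Θ l → Θ k ≠ 0 →
      (Matrix.adjugate ((BmatS K W γ μ Θ)ᵀ * BmatS K W γ μ Θ)) k k -
        (Matrix.adjugate ((BmatS K W γ μ Θ)ᵀ * BmatS K W γ μ Θ)) k l =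
      ((BmatS K W γ μ Θ)ᵀ * BmatS K W γ μ Θ).det /
        (((Finset.univ.filter (fun r => Θ r ≠ Θ k)).card : ℝ) * (γ ^ 2 / μ ^ 2) + 1) := by
  intro k l hkl hEq hnz
  have hγμ : γ / μ ≠ 0 := div_ne_zero hγ.ne' hμ.ne'
  set M : Matrix (Fin K) (Fin K) ℝ := (BmatS K W γ μ Θ)ᵀ * BmatS K W γ μ Θ with hMdef
  set v : Fin K → ℝ := fun a => (if a = k then (1:ℝ) else 0) - (if a = l then 1 else 0) with hvdef
  set lam : ℝ := ((Finset.univ.filter (fun r => Θ r ≠ Θ k)).card : ℝ) * (γ ^ 2 / μ ^ 2) + 1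
    with hlamdef
  have hvk : v k = 1 := by simp [hvdef, hkl]
  have hvl : v l = -1 := by simp [hvdef, hkl.symm]
  have key : M *ᵥ v = lam • v := by
    funext a
    rw [Pi.smul_apply, smul_eq_mul, hMdef, M_mulVec hWone hγμ]
    set G : Fin K → ℝ := fun y => if Θ a ≠ Θ y then (v a - v y) else 0 with hGdef
    have hsym : ∀ x y : Fin K, (if Θ x ≠ Θ y then
        ((if a = x then (1:ℝ) else 0) - (if a = y then 1 else 0)) * (v x - v y) else 0)
        = (if Θ y ≠ Θ x then
        ((if a = y then (1:ℝ) else 0) - (if a = x then 1 else 0)) * (v y - v x) else 0) := by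
      intro x y
      by_cases h : Θ x = Θ y
      · rw [if_neg (not_not_intro h), if_neg (not_not_intro h.symm)]
      · rw [if_pos h, if_pos (Ne.symm h)]; ring
    have hdiag : ∀ x : Fin K, (if Θ x ≠ Θ x then
        ((if a = x then (1:ℝ) else 0) - (if a = x then 1 else 0)) * (v x - v x) else 0) = 0 := by
      intro x; simp
    rw [sum_lt_symm' hsym hdiag]
    have hsplit : ∀ x y : Fin K, (if Θ x ≠ Θ y then
        ((if a = x then (1:ℝ) else 0) - (if a = y then 1 else 0)) * (v x - v y) else 0)
        = (if x = a then G y else 0) + (if y = a then G x else 0) := by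
      intro x y
      by_cases hx : x = a <;> by_cases hy : y = a
      · rw [hx, hy]; simp [hGdef]
      · rw [hx]; simp [hGdef, Ne.symm hy, hy]
      · rw [hy]
        simp only [hGdef, if_neg hx, eq_self_iff_true, if_true, zero_add]
        by_cases h : Θ x = Θ a
        · rw [if_neg (not_not_intro h), if_neg (not_not_intro h.symm)]
        · rw [if_pos h, if_pos (Ne.symm h), if_neg (show ¬a = x from Ne.symm hx)]; ring
      · simp [hx, hy, Ne.symm hx, Ne.symm hy]
    have hdouble : ∑ x, ∑ y, (if Θ x ≠ Θ y then
        ((if a = x then (1:ℝ) else 0) - (if a = y then 1 else 0)) * (v x - v y) else 0)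
        = 2 * ∑ y, G y := by
      have h1 : ∀ x : Fin K, ∑ y, (if x = a then G y else 0)
          = if x = a then (∑ y, G y) else 0 := by
        intro x; split_ifs <;> simp
      have h2 : ∀ x : Fin K, ∑ y, (if y = a then G x else 0) = G x := by
        intro x; simp
      have h3 : ∀ x : Fin K, ∑ y, ((if x = a then G y else 0) + (if y = a then G x else 0))
          = (if x = a then (∑ y, G y) else 0) + G x := by
        intro x; rw [Finset.sum_add_distrib, h1 x, h2 x]
      rw [Finset.sum_congr rfl fun x _ => Finset.sum_congr rfl fun y _ => hsplit x y,
        Finset.sum_congr rfl fun x _ => h3 x, Finset.sum_add_distrib,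
        Finset.sum_ite_eq' Finset.univ a (fun _ => ∑ y, G y)]
      simp; ring
    rw [hdouble]
    by_cases hak : a = k
    · have hva1 : v a = 1 := by rw [hak]; exact hvk
      have hΘak : Θ a = Θ k := by rw [hak]
      have hsum : ∑ y, G y = ((Finset.univ.filter (fun r => Θ r ≠ Θ k)).card : ℝ) := by
        have hpt : ∀ y, G y = if Θ y ≠ Θ k then (1:ℝ) else 0 := by
          intro y
          simp only [hGdef]
          by_cases h : Θ k = Θ y
          · rw [if_neg (not_not_intro (hΘak.trans h)), if_neg (not_not_intro h.symm)]
          · have hyk : y ≠ k := fun hc => h (by rw [hc])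
            have hyl : y ≠ l := fun hc => h (by rw [hc, ← hEq])
            have hvy : v y = 0 := by simp [hvdef, hyk, hyl]
            rw [if_pos (show Θ a ≠ Θ y from fun hc => h (hΘak.symm.trans hc)),
              if_pos (Ne.symm h), hvy, hva1]
            ring
        rw [Finset.sum_congr rfl fun y _ => hpt y, Finset.sum_boole]
      rw [hsum, hva1, if_pos (show Θ a ≠ 0 by rw [hΘak]; exact hnz), hlamdef, div_pow]
      ring
    · by_cases hal : a = l
      · have hva1 : v a = -1 := by rw [hal]; exact hvl
        have hΘak : Θ a = Θ k := by rw [hal, ← hEq]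
        have hsum : ∑ y, G y = -((Finset.univ.filter (fun r => Θ r ≠ Θ k)).card : ℝ) := by
          have hpt : ∀ y, G y = -(if Θ y ≠ Θ k then (1:ℝ) else 0) := by
            intro y
            simp only [hGdef]
            by_cases h : Θ k = Θ y
            · rw [if_neg (not_not_intro (hΘak.trans h)), if_neg (not_not_intro h.symm)]; ring
            · have hyk : y ≠ k := fun hc => h (by rw [hc])
              have hyl : y ≠ l := fun hc => h (by rw [hc, ← hEq])
              have hvy : v y = 0 := by simp [hvdef, hyk, hyl]
              rw [if_pos (show Θ a ≠ Θ y from fun hc => h (hΘak.symm.trans hc)),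
                if_pos (Ne.symm h), hvy, hva1]
              ring
          rw [Finset.sum_congr rfl fun y _ => hpt y, Finset.sum_neg_distrib, Finset.sum_boole]
        rw [hsum, hva1, if_pos (show Θ a ≠ 0 by rw [hΘak]; exact hnz), hlamdef, div_pow]
        ring
      · have hva : v a = 0 := by simp [hvdef, hak, hal]
        have hsum : ∑ y, G y = 0 := by
          have hpt : ∀ y, G y = (if y = k then -(if Θ a ≠ Θ k then (1:ℝ) else 0) else 0)
              + (if y = l then (if Θ a ≠ Θ k then (1:ℝ) else 0) else 0) := by
            intro y
            simp only [hGdef]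
            by_cases hyk : y = k
            · rw [hyk, hva, hvk, if_pos rfl, if_neg hkl, add_zero]
              split_ifs <;> ring
            · by_cases hyl : y = l
              · rw [hyl, hva, hvl, if_neg (Ne.symm hkl), if_pos rfl, zero_add, ← hEq]
                split_ifs <;> ring
              · have hvy : v y = 0 := by simp [hvdef, hyk, hyl]
                rw [hva, hvy, if_neg hyk, if_neg hyl]
                simp
          rw [Finset.sum_congr rfl fun y _ => hpt y, Finset.sum_add_distrib,
            Finset.sum_ite_eq' Finset.univ k, Finset.sum_ite_eq' Finset.univ l]
          simp
        rw [hsum, hva]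
        simp
  have hadj : Matrix.adjugate M *ᵥ (M *ᵥ v) = M.det • v := by
    rw [Matrix.mulVec_mulVec, Matrix.adjugate_mul, Matrix.smul_mulVec, Matrix.one_mulVec]
  rw [key, Matrix.mulVec_smul] at hadj
  have heval : (Matrix.adjugate M *ᵥ v) k = Matrix.adjugate M k k - Matrix.adjugate M k l := by
    simp only [Matrix.mulVec, dotProduct, hvdef, mul_sub, mul_ite, mul_one, mul_zero,
      Finset.sum_sub_distrib, Finset.sum_ite_eq' Finset.univ, Finset.mem_univ, if_pos]
  have hk := congrFun hadj k
  rw [Pi.smul_apply, Pi.smul_apply, heval, hvk, smul_eq_mul, smul_eq_mul, mul_one] at hk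
  have hlampos : 0 < lam := by
    rw [hlamdef]
    have h0 : (0:ℝ) ≤ ((Finset.univ.filter (fun r => Θ r ≠ Θ k)).card : ℝ) * (γ ^ 2 / μ ^ 2) := by
      positivity
    linarith
  rw [eq_div_iff hlampos.ne']
  linarith [hk]
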